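/- Let k have characteristic 2 and equip kG with the G-invariant bilinear form B_t(x,y) = B₁(xt, y), where B₁ makes the group elements an orthonormal basis and t ∈ G is an involution. Two involutions s, t ∈ G are conjugate in G if and only if there exists x ∈ kG with B_t(x, sx) ≠ 0. Equivalently, B_t(x, sx) = Σ_{g ∈ G, g = sgt} x_g², where x = Σ x_g g. -/

import Mathlib

/-- Two involutions `s, t ∈ G` are conjugate iff `B_t(x, sx) ≠ 0` for some `x ∈ kG`, where
`B_t(x,y) = B₁(xt, y)` and `B₁` makes the group elements orthonormal; moreover
`B_t(x, sx) = ∑_{g = sgt} x_g²`. -/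
theorem stmt12 {k G : Type*} [Field k] [CharP k 2] [Group G] [Fintype G] [DecidableEq G]
    (s t : G) (hs : s * s = 1) (hs1 : s ≠ 1) (ht : t * t = 1) (ht1 : t ≠ 1) :
    ((∃ g : G, g * t * g⁻¹ = s) ↔
      ∃ x : MonoidAlgebra k G,
        (∑ g : G, (x * MonoidAlgebra.of k G t).coeff g * ((MonoidAlgebra.of k G s) * x).coeff g) ≠ 0) ∧
    (∀ x : MonoidAlgebra k G,
      (∑ g : G, (x * MonoidAlgebra.of k G t).coeff g * ((MonoidAlgebra.of k G s) * x).coeff g) =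
        ∑ g ∈ Finset.univ.filter (fun g : G => g = s * g * t), (x.coeff g) ^ 2) := by
  have hsinv : s⁻¹ = s := inv_eq_of_mul_eq_one_right hs
  have htinv : t⁻¹ = t := inv_eq_of_mul_eq_one_right ht
  have key : ∀ x : MonoidAlgebra k G,
      (∑ g : G, (x * MonoidAlgebra.of k G t).coeff g * ((MonoidAlgebra.of k G s) * x).coeff g) =
        ∑ g ∈ Finset.univ.filter (fun g : G => g = s * g * t), (x.coeff g) ^ 2 := by
    intro x
    have h1 : ∀ g : G, (x * MonoidAlgebra.of k G t).coeff g = x.coeff (g * t) := by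
      intro g
      rw [MonoidAlgebra.of_apply, MonoidAlgebra.coeff_mul_single_apply, mul_one, htinv]
    have h2 : ∀ g : G, ((MonoidAlgebra.of k G s) * x).coeff g = x.coeff (s * g) := by
      intro g
      rw [MonoidAlgebra.of_apply, MonoidAlgebra.coeff_single_mul_apply, one_mul, hsinv]
    simp only [h1, h2]
    have hre : (∑ g : G, x.coeff (g * t) * x.coeff (s * g)) = ∑ g : G, x.coeff g * x.coeff (s * g * t) := by
      rw [← Equiv.sum_comp (Equiv.mulRight t) (fun g => x.coeff (g * t) * x.coeff (s * g))]
      refine Finset.sum_congr rfl fun g _ => ?_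
      simp only [Equiv.coe_mulRight]
      rw [mul_assoc g t t, ht, mul_one, mul_assoc s g t]
    rw [hre, ← Finset.sum_filter_add_sum_filter_not Finset.univ
      (fun g : G => g = s * g * t) (fun g => x.coeff g * x.coeff (s * g * t))]
    have hfix : ∑ g ∈ Finset.univ.filter (fun g : G => g = s * g * t),
        x.coeff g * x.coeff (s * g * t) = ∑ g ∈ Finset.univ.filter (fun g : G => g = s * g * t),
        (x.coeff g) ^ 2 := by
      refine Finset.sum_congr rfl fun g hg => ?_
      rw [Finset.mem_filter] at hg
      rw [← hg.2, sq]
    have hphi : ∀ g : G, s * (s * g * t) * t = g := by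
      intro g
      rw [show s * (s * g * t) * t = s * s * g * (t * t) by group, hs, ht, one_mul, mul_one]
    have hcancel : ∑ g ∈ Finset.univ.filter (fun g : G => ¬ g = s * g * t),
        x.coeff g * x.coeff (s * g * t) = 0 := by
      refine Finset.sum_involution (fun g _ => s * g * t) ?_ ?_ ?_ ?_
      · intro g _
        rw [hphi, mul_comm (x.coeff (s * g * t)) (x.coeff g), CharTwo.add_self_eq_zero]
      · intro g hg _
        rw [Finset.mem_filter] at hg
        exact fun h => hg.2 h.symm
      · intro g hg
        rw [Finset.mem_filter] at hg ⊢
        refine ⟨Finset.mem_univ _, fun h => hg.2 ?_⟩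
        conv_lhs => rw [← hphi g, ← h]
      · intro g _
        exact hphi g
    rw [hfix, hcancel, add_zero]
  refine ⟨⟨?_, ?_⟩, key⟩
  · rintro ⟨g, hg⟩
    refine ⟨MonoidAlgebra.single g 1, ?_⟩
    rw [key]
    have hgmem : g ∈ Finset.univ.filter (fun g : G => g = s * g * t) := by
      simp only [Finset.mem_filter, Finset.mem_univ, true_and]
      rw [← hg]
      rw [show g * t * g⁻¹ * g * t = g * (t * t) from by group, ht, mul_one]
    rw [Finset.sum_eq_single g]
    · simp
    · intro b _ hb
      simp [MonoidAlgebra.single_apply, hb.symm]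
    · exact fun h => absurd hgmem h
  · rintro ⟨x, hx⟩
    rw [key] at hx
    obtain ⟨g, hg, -⟩ := Finset.exists_ne_zero_of_sum_ne_zero hx
    rw [Finset.mem_filter] at hg
    refine ⟨g, ?_⟩
    have h1 : g * t = s * g := by
      conv_lhs => rw [hg.2]
      rw [mul_assoc (s * g) t t, ht, mul_one]
    rw [h1, mul_assoc, mul_inv_cancel, mul_one]
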